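/- Let P be a Markov kernel on X, G : X×X → [0,1] measurable, and S_ν(n) = E_ν[∏_{i=0}^{n−1} G(X_i, X_{i+1})] as above. Suppose there are constants C₁, C₂ ≥ 0 and α, β ∈ (0,1), a point x ∈ X and a probability measure μ such that for all n ∈ ℕ, ‖P^n(x,·) − μ‖_TV ≤ C₁ α^n and S_μ(n) ≤ C₂ β^n. Then for all n ∈ ℕ, S_{δ_x}(n) ≤ (C₂/β + 2C₁) · γ^n, where γ = β^{log(α)/(log(β)+log(α))}. -/

import Mathlib

set_option linter.unusedSectionVars false
set_option linter.unusedVariables false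
set_option maxHeartbeats 1000000


open MeasureTheory ProbabilityTheory ENNReal Filter Topology

section Setup

variable {S : Type*} [MeasurableSpace S]

/-- The `t`-fold composition of a Markov kernel. -/
noncomputable def kpow (P : ProbabilityTheory.Kernel S S) : ℕ → ProbabilityTheory.Kernel S S
  | 0 => ProbabilityTheory.Kernel.id
  | n + 1 => (kpow P n).comp P

/-- `IsTrajMeasure P ν μ` : `μ` is the law on `ℕ → S` of the time-homogeneous Markov chain
with transition kernel `P` and initial distribution `ν`. -/
def IsTrajMeasure (P : ProbabilityTheory.Kernel S S) (ν : MeasureTheory.Measure S)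
    (μ : MeasureTheory.Measure (ℕ → S)) : Prop :=
  MeasureTheory.IsProbabilityMeasure μ ∧
    μ.map (fun ω => ω 0) = ν ∧
    ∀ n : ℕ,
      μ.map (fun ω => ((fun i : Fin (n + 1) => ω (i : ℕ)), ω (n + 1))) =
        (μ.map (fun ω => fun i : Fin (n + 1) => ω (i : ℕ))).compProd
          (P.comap (fun v : Fin (n + 1) → S => v (Fin.last n)) (measurable_pi_apply _))

/-- `Q` is a faithful coupling of the kernel `P` with itself. -/
def IsFaithfulCoupling (P : ProbabilityTheory.Kernel S S)
    (Q : ProbabilityTheory.Kernel (S × S) (S × S)) : Prop :=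
  (∀ p : S × S, (Q p).map Prod.fst = P p.1) ∧
    (∀ p : S × S, (Q p).map Prod.snd = P p.2) ∧
    ∀ x : S, Q (x, x) {q : S × S | q.1 = q.2} = 1

/-- The meeting time `τ = inf {t : X_t = Y_t}` of a coupled trajectory, with value `∞`
if the chains never meet. -/
noncomputable def meetTime (ω : ℕ → S × S) : ℝ≥0∞ :=
  ⨅ (n : ℕ) (_ : (ω n).1 = (ω n).2), (n : ℝ≥0∞)

/-- `G = ∑_{t=0}^{τ-1} (h(X_t) - h(Y_t))` along a coupled trajectory. -/
noncomputable def Gsum (h : S → ℝ) (ω : ℕ → S × S) : ℝ :=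
  ∑' t : ℕ, if (t : ℝ≥0∞) < meetTime ω then h (ω t).1 - h (ω t).2 else 0

/-- Total variation distance between two measures. -/
noncomputable def tvDist (μ ν : MeasureTheory.Measure S) : ℝ :=
  ⨆ A : {A : Set S // MeasurableSet A}, |(μ A.1).toReal - (ν A.1).toReal|

/-- `ζ(s) = ∑_{n ≥ 1} n^{-s}`, as a value in `ℝ≥0∞`. -/
noncomputable def zetaE (s : ℝ) : ℝ≥0∞ := ∑' n : ℕ, ((n : ℝ≥0∞) + 1) ^ (-s)

/-- `π`-irreducibility of a kernel. -/
def PiIrreducible (P : ProbabilityTheory.Kernel S S) (π : MeasureTheory.Measure S) : Prop :=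
  ∀ x : S, ∀ A : Set S, MeasurableSet A → 0 < π A → ∃ n : ℕ, 1 ≤ n ∧ 0 < (kpow P n) x A

/-- `g⋆(x) = ∑_{t=0}^∞ P^t h (x)`. -/
noncomputable def gstar (P : ProbabilityTheory.Kernel S S) (h : S → ℝ) (x : S) : ℝ :=
  ∑' t : ℕ, ∫ z, h z ∂((kpow P t) x)

end Setup

namespace PFCRaux

variable {S : Type*} [MeasurableSpace S]

lemma integrable01 {T : Type*} [MeasurableSpace T] (ρ : MeasureTheory.Measure T)
    [IsFiniteMeasure ρ] {f : T → ℝ} (hf : Measurable f) (h0 : ∀ z, 0 ≤ f z)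
    (h1 : ∀ z, f z ≤ 1) : Integrable f ρ :=
  (integrable_const 1).mono' hf.aestronglyMeasurable
    (Filter.Eventually.of_forall fun z => by
      rw [Real.norm_eq_abs, abs_of_nonneg (h0 z)]; exact h1 z)

lemma integral01 {T : Type*} [MeasurableSpace T] (ρ : MeasureTheory.Measure T)
    [IsProbabilityMeasure ρ] {f : T → ℝ} (hf : Measurable f) (h0 : ∀ z, 0 ≤ f z)
    (h1 : ∀ z, f z ≤ 1) : ∫ z, f z ∂ρ ≤ 1 := by
  calc ∫ z, f z ∂ρ ≤ ∫ _z, (1 : ℝ) ∂ρ :=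
        integral_mono (integrable01 ρ hf h0 h1) (integrable_const 1) h1
    _ = 1 := by simp

/-- `hseq P G k z = E_z[∏_{i<k} G(X_i, X_{i+1})]` defined by backward recursion. -/
noncomputable def hseq (P : ProbabilityTheory.Kernel S S) (G : S × S → ℝ) : ℕ → S → ℝ
  | 0 => fun _ => 1
  | k + 1 => fun z => ∫ y, G (z, y) * hseq P G k y ∂(P z)

variable (P : ProbabilityTheory.Kernel S S) [IsMarkovKernel P] {G : S × S → ℝ}

lemma hseq_sm (hGmeas : Measurable G) : ∀ k, StronglyMeasurable (hseq P G k)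
  | 0 => stronglyMeasurable_const
  | (k + 1) => by
      have hm : StronglyMeasurable (fun p : S × S => G p * hseq P G k p.2) :=
        (hGmeas.mul ((hseq_sm hGmeas k).measurable.comp measurable_snd)).stronglyMeasurable
      exact hm.integral_kernel_prod_right' (κ := P)

lemma hseq_nonneg (hG01 : ∀ q, G q ∈ Set.Icc (0 : ℝ) 1) :
    ∀ k z, 0 ≤ hseq P G k z
  | 0, _ => zero_le_one
  | (k + 1), z => integral_nonneg fun y => mul_nonneg (hG01 _).1 (hseq_nonneg hG01 k y)

lemma hseq_le_one (hGmeas : Measurable G) (hG01 : ∀ q, G q ∈ Set.Icc (0 : ℝ) 1) :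
    ∀ k z, hseq P G k z ≤ 1
  | 0, _ => le_refl 1
  | (k + 1), z => by
      have hb : ∀ y, G (z, y) * hseq P G k y ≤ 1 := fun y =>
        mul_le_one₀ (hG01 _).2 (hseq_nonneg P hG01 k y) (hseq_le_one hGmeas hG01 k y)
      have hint : Integrable (fun y => G (z, y) * hseq P G k y) (P z) :=
        integrable01 _ ((hGmeas.comp (measurable_const.prodMk measurable_id)).mul
            (hseq_sm P hGmeas k).measurable)
          (fun y => mul_nonneg (hG01 _).1 (hseq_nonneg P hG01 k y)) hb
      calc hseq P G (k + 1) z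
          ≤ ∫ _y, (1 : ℝ) ∂(P z) := integral_mono hint (integrable_const 1) hb
        _ = 1 := by simp

lemma hseq_integrand_int (hGmeas : Measurable G) (hG01 : ∀ q, G q ∈ Set.Icc (0 : ℝ) 1)
    (k : ℕ) (z : S) : Integrable (fun y => G (z, y) * hseq P G k y) (P z) :=
  integrable01 _ ((hGmeas.comp (measurable_const.prodMk measurable_id)).mul
      (hseq_sm P hGmeas k).measurable)
    (fun y => mul_nonneg (hG01 _).1 (hseq_nonneg P hG01 k y))
    (fun y => mul_le_one₀ (hG01 _).2 (hseq_nonneg P hG01 k y) (hseq_le_one P hGmeas hG01 k y))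

lemma hseq_succ_le (hGmeas : Measurable G) (hG01 : ∀ q, G q ∈ Set.Icc (0 : ℝ) 1)
    (k : ℕ) (z : S) : hseq P G (k + 1) z ≤ ∫ y, hseq P G k y ∂(P z) :=
  integral_mono (hseq_integrand_int P hGmeas hG01 k z)
    (integrable01 _ (hseq_sm P hGmeas k).measurable (hseq_nonneg P hG01 k)
      (hseq_le_one P hGmeas hG01 k))
    (fun y => mul_le_of_le_one_left (hseq_nonneg P hG01 k y) (hG01 _).2)


lemma isMarkovKernel_kpow (P : ProbabilityTheory.Kernel S S) [IsMarkovKernel P] :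
    ∀ m, IsMarkovKernel (kpow P m)
  | 0 => by rw [kpow]; infer_instance
  | (m + 1) => by
      haveI := isMarkovKernel_kpow P m
      rw [kpow]; infer_instance

lemma integral_bind01 {T U : Type*} [MeasurableSpace T] [MeasurableSpace U]
    (ρ : MeasureTheory.Measure T) [IsProbabilityMeasure ρ]
    (κ : ProbabilityTheory.Kernel T U) [IsMarkovKernel κ]
    {f : U → ℝ} (hf : Measurable f) (h0 : ∀ z, 0 ≤ f z) (h1 : ∀ z, f z ≤ 1) :
    ∫ y, f y ∂(ρ.bind κ) = ∫ x, ∫ y, f y ∂(κ x) ∂ρ := by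
  have hgm : Measurable (fun x => ∫ y, f y ∂(κ x)) :=
    (MeasureTheory.StronglyMeasurable.integral_kernel_prod_right' (κ := κ)
      ((hf.comp measurable_snd).stronglyMeasurable)).measurable
  have hg0 : ∀ x, 0 ≤ ∫ y, f y ∂(κ x) := fun x => integral_nonneg h0
  have hg1 : ∀ x, ∫ y, f y ∂(κ x) ≤ 1 := fun x => integral01 _ hf h0 h1
  rw [integral_eq_lintegral_of_nonneg_ae (Filter.Eventually.of_forall h0)
    hf.aestronglyMeasurable]
  rw [MeasureTheory.Measure.lintegral_bind κ.measurable.aemeasurable hf.ennreal_ofReal.aemeasurable]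
  have hinner : ∀ x, ∫⁻ y, ENNReal.ofReal (f y) ∂(κ x) = ENNReal.ofReal (∫ y, f y ∂(κ x)) :=
    fun x => (ofReal_integral_eq_lintegral_ofReal (integrable01 _ hf h0 h1)
      (Filter.Eventually.of_forall h0)).symm
  simp_rw [hinner]
  rw [← ofReal_integral_eq_lintegral_ofReal (integrable01 ρ hgm hg0 hg1)
    (Filter.Eventually.of_forall hg0)]
  rw [ENNReal.toReal_ofReal (integral_nonneg hg0)]

lemma hseq_le_kpow (P : ProbabilityTheory.Kernel S S) [IsMarkovKernel P] {G : S × S → ℝ}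
    (hGmeas : Measurable G) (hG01 : ∀ q, G q ∈ Set.Icc (0 : ℝ) 1) :
    ∀ (m k : ℕ) (x : S), hseq P G (k + m) x ≤ ∫ y, hseq P G k y ∂((kpow P m) x)
  | 0, k, x => by
      rw [kpow, ProbabilityTheory.Kernel.id_apply,
        integral_dirac' _ _ (hseq_sm P hGmeas k)]
      exact le_of_eq rfl
  | (m + 1), k, x => by
      haveI := isMarkovKernel_kpow P m
      have hgm : Measurable (fun y => ∫ z, hseq P G k z ∂((kpow P m) y)) :=
        (MeasureTheory.StronglyMeasurable.integral_kernel_prod_right' (κ := kpow P m)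
          (((hseq_sm P hGmeas k).measurable.comp measurable_snd).stronglyMeasurable)).measurable
      have hg0 : ∀ y, 0 ≤ ∫ z, hseq P G k z ∂((kpow P m) y) :=
        fun y => integral_nonneg (hseq_nonneg P hG01 k)
      have hg1 : ∀ y, ∫ z, hseq P G k z ∂((kpow P m) y) ≤ 1 :=
        fun y => integral01 _ (hseq_sm P hGmeas k).measurable (hseq_nonneg P hG01 k)
          (hseq_le_one P hGmeas hG01 k)
      calc hseq P G (k + (m + 1)) x = hseq P G ((k + m) + 1) x := rfl
        _ ≤ ∫ y, hseq P G (k + m) y ∂(P x) := hseq_succ_le P hGmeas hG01 (k + m) x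
        _ ≤ ∫ y, (∫ z, hseq P G k z ∂((kpow P m) y)) ∂(P x) :=
            integral_mono
              (integrable01 _ (hseq_sm P hGmeas (k + m)).measurable
                (hseq_nonneg P hG01 _) (hseq_le_one P hGmeas hG01 _))
              (integrable01 _ hgm hg0 hg1)
              (fun y => hseq_le_kpow P hGmeas hG01 m k y)
        _ = ∫ z, hseq P G k z ∂((kpow P (m + 1)) x) := by
            rw [show kpow P (m + 1) = (kpow P m).comp P from rfl,
              ProbabilityTheory.Kernel.comp_apply,
              integral_bind01 (P x) (kpow P m) (hseq_sm P hGmeas k).measurable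
                (hseq_nonneg P hG01 k) (hseq_le_one P hGmeas hG01 k)]

lemma traj_integral_eq (P : ProbabilityTheory.Kernel S S) [IsMarkovKernel P] {G : S × S → ℝ}
    (hGmeas : Measurable G) (hG01 : ∀ q, G q ∈ Set.Icc (0 : ℝ) 1)
    {ν : MeasureTheory.Measure S} {η : MeasureTheory.Measure (ℕ → S)}
    (hη : IsTrajMeasure P ν η) :
    ∀ n k, ∫ ω, (∏ i : Fin n, G (ω (i : ℕ), ω ((i : ℕ) + 1))) * hseq P G k (ω n) ∂η
      = ∫ z, hseq P G (n + k) z ∂ν := by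
  obtain ⟨hprob, h0, hrec⟩ := hη
  haveI := hprob
  intro n
  induction n with
  | zero =>
      intro k
      simp only [Finset.univ_eq_empty, Finset.prod_empty, one_mul, Nat.zero_add]
      rw [← h0, integral_map (measurable_pi_apply 0).aemeasurable
        (hseq_sm P hGmeas k).aestronglyMeasurable]
  | succ n ih =>
      intro k
      set F : (Fin (n + 1) → S) × S → ℝ := fun p =>
        (∏ i : Fin n, G (p.1 i.castSucc, p.1 i.succ)) *
          (G (p.1 (Fin.last n), p.2) * hseq P G k p.2) with hF
      have hprodmeas : Measurable (fun v : Fin (n + 1) → S =>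
          ∏ i : Fin n, G (v i.castSucc, v i.succ)) :=
        Finset.measurable_prod _ fun i _ =>
          hGmeas.comp ((measurable_pi_apply _).prodMk (measurable_pi_apply _))
      have hFmeas : Measurable F := by
        refine ((hprodmeas.comp measurable_fst).mul ?_)
        exact (hGmeas.comp (((measurable_pi_apply _).comp measurable_fst).prodMk
          measurable_snd)).mul ((hseq_sm P hGmeas k).measurable.comp measurable_snd)
      have hprod0 : ∀ v : Fin (n + 1) → S, 0 ≤ ∏ i : Fin n, G (v i.castSucc, v i.succ) :=
        fun v => Finset.prod_nonneg fun i _ => (hG01 _).1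
      have hprod1 : ∀ v : Fin (n + 1) → S, (∏ i : Fin n, G (v i.castSucc, v i.succ)) ≤ 1 :=
        fun v => Finset.prod_le_one (fun i _ => (hG01 _).1) (fun i _ => (hG01 _).2)
      have hF0 : ∀ p, 0 ≤ F p := fun p => mul_nonneg (hprod0 _)
        (mul_nonneg (hG01 _).1 (hseq_nonneg P hG01 k _))
      have hF1 : ∀ p, F p ≤ 1 := fun p => mul_le_one₀ (hprod1 _)
        (mul_nonneg (hG01 _).1 (hseq_nonneg P hG01 k _))
        (mul_le_one₀ (hG01 _).2 (hseq_nonneg P hG01 k _) (hseq_le_one P hGmeas hG01 k _))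
      have hcoords : Measurable (fun ω : ℕ → S => fun i : Fin (n + 1) => ω (i : ℕ)) :=
        measurable_pi_lambda _ fun i => measurable_pi_apply _
      have hpair : Measurable (fun ω : ℕ → S =>
          ((fun i : Fin (n + 1) => ω (i : ℕ)), ω (n + 1))) :=
        hcoords.prodMk (measurable_pi_apply _)
      haveI : IsProbabilityMeasure (η.map (fun ω => fun i : Fin (n + 1) => ω (i : ℕ))) :=
        Measure.isProbabilityMeasure_map hcoords.aemeasurable
      have step1 : ∫ ω, (∏ i : Fin (n + 1), G (ω (i : ℕ), ω ((i : ℕ) + 1))) *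
            hseq P G k (ω (n + 1)) ∂η
          = ∫ ω, F ((fun i : Fin (n + 1) => ω (i : ℕ)), ω (n + 1)) ∂η := by
        refine integral_congr_ae (Filter.Eventually.of_forall fun ω => ?_)
        simp only [hF, Fin.prod_univ_castSucc, Fin.coe_castSucc, Fin.val_succ, Fin.val_last]
        ring
      rw [step1,
        ← integral_map hpair.aemeasurable hFmeas.aestronglyMeasurable, hrec n,
        MeasureTheory.Measure.integral_compProd (integrable01 _ hFmeas hF0 hF1)]
      have hinner : ∀ v : Fin (n + 1) → S,
          ∫ y, F (v, y) ∂((P.comap (fun v : Fin (n + 1) → S => v (Fin.last n))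
              (measurable_pi_apply _)) v)
          = (∏ i : Fin n, G (v i.castSucc, v i.succ)) * hseq P G (k + 1) (v (Fin.last n)) := by
        intro v
        rw [ProbabilityTheory.Kernel.comap_apply]
        simp only [hF]
        rw [integral_const_mul]
        rfl
      rw [integral_congr_ae (Filter.Eventually.of_forall hinner)]
      have hgm : Measurable (fun v : Fin (n + 1) → S =>
          (∏ i : Fin n, G (v i.castSucc, v i.succ)) * hseq P G (k + 1) (v (Fin.last n))) :=
        hprodmeas.mul ((hseq_sm P hGmeas (k + 1)).measurable.comp (measurable_pi_apply _))
      rw [integral_map hcoords.aemeasurable hgm.aestronglyMeasurable]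
      have step3 : ∫ ω, (∏ i : Fin n,
            G ((fun j : Fin (n+1) => ω (j : ℕ)) i.castSucc,
               (fun j : Fin (n+1) => ω (j : ℕ)) i.succ)) *
            hseq P G (k + 1) ((fun j : Fin (n+1) => ω (j : ℕ)) (Fin.last n)) ∂η
          = ∫ ω, (∏ i : Fin n, G (ω (i : ℕ), ω ((i : ℕ) + 1))) * hseq P G (k + 1) (ω n) ∂η := by
        refine integral_congr_ae (Filter.Eventually.of_forall fun ω => ?_)
        simp [Fin.coe_castSucc, Fin.val_succ, Fin.val_last]
      rw [step3, ih (k + 1), show n + (k + 1) = n + 1 + k by omega]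

lemma traj_integral_eq' (P : ProbabilityTheory.Kernel S S) [IsMarkovKernel P] {G : S × S → ℝ}
    (hGmeas : Measurable G) (hG01 : ∀ q, G q ∈ Set.Icc (0 : ℝ) 1)
    {ν : MeasureTheory.Measure S} {η : MeasureTheory.Measure (ℕ → S)}
    (hη : IsTrajMeasure P ν η) (n : ℕ) :
    ∫ ω, ∏ i ∈ Finset.range n, G (ω i, ω (i + 1)) ∂η = ∫ z, hseq P G n z ∂ν := by
  have h := traj_integral_eq P hGmeas hG01 hη n 0
  have heq : ∫ ω, (∏ i : Fin n, G (ω (i : ℕ), ω ((i : ℕ) + 1))) * hseq P G 0 (ω n) ∂η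
      = ∫ ω, ∏ i ∈ Finset.range n, G (ω i, ω (i + 1)) ∂η := by
    refine integral_congr_ae (Filter.Eventually.of_forall fun ω => ?_)
    show (∏ i : Fin n, G (ω (i : ℕ), ω ((i : ℕ) + 1))) * hseq P G 0 (ω n)
        = ∏ i ∈ Finset.range n, G (ω i, ω (i + 1))
    rw [show hseq P G 0 (ω n) = 1 from rfl, mul_one,
      Fin.prod_univ_eq_prod_range (fun j => G (ω j, ω (j + 1))) n]
  rw [← heq, h, Nat.add_zero]

lemma integral_le_integral_add_of_tv {ν₁ ν₂ : MeasureTheory.Measure S}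
    [IsProbabilityMeasure ν₁] [IsProbabilityMeasure ν₂]
    {f : S → ℝ} (hf : Measurable f) (h0 : ∀ z, 0 ≤ f z) (h1 : ∀ z, f z ≤ 1)
    {D : ℝ} (hD : ∀ A : Set S, MeasurableSet A → (ν₁ A).toReal ≤ (ν₂ A).toReal + D) :
    ∫ z, f z ∂ν₁ ≤ ∫ z, f z ∂ν₂ + D := by
  haveI hfin : IsFiniteMeasure ((volume : MeasureTheory.Measure ℝ).restrict (Set.Ioc (0:ℝ) 1)) :=
    ⟨by simp [Real.volume_Ioc]⟩
  have hint : ∀ ν : MeasureTheory.Measure S, IsProbabilityMeasure ν →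
      IntegrableOn (fun t : ℝ => (ν {a | t < f a}).toReal) (Set.Ioc (0:ℝ) 1) volume := by
    intro ν hν
    haveI := hν
    have hanti : Antitone (fun t : ℝ => (ν {a | t < f a}).toReal) := fun s t hst =>
      ENNReal.toReal_mono (measure_ne_top ν _)
        (measure_mono fun a ha => lt_of_le_of_lt hst ha)
    exact integrable01 _ hanti.measurable (fun t => ENNReal.toReal_nonneg)
      (fun t => by
        have h := ENNReal.toReal_mono (measure_ne_top ν Set.univ)
          (measure_mono (Set.subset_univ {a | t < f a}))
        simpa using h)
  have key : ∀ ν : MeasureTheory.Measure S, IsProbabilityMeasure ν →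
      ∫ z, f z ∂ν = ∫ t in Set.Ioc (0:ℝ) 1, (ν {a | t < f a}).toReal := by
    intro ν hν
    haveI := hν
    have hanti : Antitone (fun t : ℝ => (ν {a | t < f a}).toReal) := fun s t hst =>
      ENNReal.toReal_mono (measure_ne_top ν _)
        (measure_mono fun a ha => lt_of_le_of_lt hst ha)
    have hzero : Set.EqOn (fun t : ℝ => (ν {a | t < f a}).toReal) 0 (Set.Ioi (1:ℝ)) := by
      intro t ht
      have hempty : {a | t < f a} = ∅ :=
        Set.eq_empty_of_forall_notMem fun a ha =>
          absurd ha (not_lt.mpr ((h1 a).trans (le_of_lt ht)))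
      simp [hempty]
    rw [(integrable01 ν hf h0 h1).integral_eq_integral_meas_lt
        (Filter.Eventually.of_forall h0)]
    simp_rw [measureReal_def]
    rw [show Set.Ioi (0:ℝ) = Set.Ioc 0 1 ∪ Set.Ioi 1 from (Set.Ioc_union_Ioi_eq_Ioi zero_le_one).symm,
      setIntegral_union Set.Ioc_disjoint_Ioi_same measurableSet_Ioi (hint ν hν)
        (((integrableOn_congr_fun hzero measurableSet_Ioi).mpr (integrableOn_zero))),
      setIntegral_congr_fun measurableSet_Ioi hzero]
    simp
  rw [key ν₁ inferInstance, key ν₂ inferInstance]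
  have hmono : ∫ t in Set.Ioc (0:ℝ) 1, (ν₁ {a | t < f a}).toReal
      ≤ ∫ t in Set.Ioc (0:ℝ) 1, ((ν₂ {a | t < f a}).toReal + D) := by
    refine integral_mono (hint ν₁ inferInstance) ((hint ν₂ inferInstance).add
      (integrable_const D)) (fun t => hD _ (measurableSet_lt measurable_const hf))
  refine hmono.trans ?_
  rw [integral_add (hint ν₂ inferInstance) (integrable_const D)]
  simp [Real.volume_Ioc]

end PFCRaux

open PFCRaux

/-- Combining a geometric TV convergence rate from `x` to `μ` with a
geometric decay of `S_μ(n)` yields a geometric decay of `S_{δ_x}(n)` with the combined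
rate `β^{log α/(log β + log α)}`. -/
theorem product_functional_combined_rate {S : Type*} [MeasurableSpace S]
    (P : ProbabilityTheory.Kernel S S) [IsMarkovKernel P]
    (ξ : ProbabilityTheory.Kernel S (ℕ → S))
    (hξ : ∀ x : S, IsTrajMeasure P (MeasureTheory.Measure.dirac x) (ξ x))
    (G : S × S → ℝ) (hGmeas : Measurable G) (hG01 : ∀ q, G q ∈ Set.Icc (0 : ℝ) 1)
    (μ : MeasureTheory.Measure S) [IsProbabilityMeasure μ]
    (x : S) (C₁ C₂ α β : ℝ) (hC₁ : 0 ≤ C₁) (hC₂ : 0 ≤ C₂)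
    (hα : α ∈ Set.Ioo (0 : ℝ) 1) (hβ : β ∈ Set.Ioo (0 : ℝ) 1)
    (htv : ∀ n : ℕ, tvDist ((kpow P n) x) μ ≤ C₁ * α ^ n)
    (hSμ : ∀ n : ℕ,
      ∫ ω, ∏ i ∈ Finset.range n, G (ω i, ω (i + 1)) ∂(μ.bind fun z => ξ z) ≤ C₂ * β ^ n) :
    ∀ n : ℕ,
      ∫ ω, ∏ i ∈ Finset.range n, G (ω i, ω (i + 1)) ∂(ξ x) ≤
        (C₂ / β + 2 * C₁) * (β ^ (Real.log α / (Real.log β + Real.log α))) ^ n := by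
  intro n
  have hlαneg : Real.log α < 0 := Real.log_neg hα.1 hα.2
  have hlβneg : Real.log β < 0 := Real.log_neg hβ.1 hβ.2
  have hdneg : Real.log β + Real.log α < 0 := by linarith
  have hdne : Real.log β + Real.log α ≠ 0 := ne_of_lt hdneg
  set θ := Real.log α / (Real.log β + Real.log α) with hθdef
  have hθpos : 0 < θ := div_pos_of_neg_of_neg hlαneg hdneg
  have hθd : θ * (Real.log β + Real.log α) = Real.log α := div_mul_cancel₀ _ hdne
  have hθlt : θ < 1 := by
    nlinarith [hθd]
  set γ := β ^ θ with hγdef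
  have hγpos : 0 < γ := Real.rpow_pos_of_pos hβ.1 θ
  -- choice of split point
  have hcn : (0:ℝ) ≤ (n:ℝ) := Nat.cast_nonneg n
  have hθn0 : (0:ℝ) ≤ (1 - θ) * n := mul_nonneg (by linarith) hcn
  set m := ⌈(1 - θ) * (n:ℝ)⌉₊ with hmdef
  have hmn : m ≤ n := Nat.ceil_le.mpr (by nlinarith [mul_nonneg hθpos.le hcn])
  set k := n - m with hkdef
  have hkm : k + m = n := Nat.sub_add_cancel hmn
  have hmlb : ((1 - θ) * (n:ℝ)) ≤ m := Nat.le_ceil _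
  have hmub : (m:ℝ) < (1 - θ) * n + 1 := Nat.ceil_lt_add_one hθn0
  have hkcast : (k:ℝ) = (n:ℝ) - (m:ℝ) := by
    rw [hkdef, Nat.cast_sub hmn]
  haveI := isMarkovKernel_kpow P m
  haveI := (hξ x).1
  -- step 1 : LHS = hseq n x
  have e1 : ∫ ω, ∏ i ∈ Finset.range n, G (ω i, ω (i + 1)) ∂(ξ x) = hseq P G n x := by
    rw [traj_integral_eq' P hGmeas hG01 (hξ x) n, integral_dirac' _ _ (hseq_sm P hGmeas n)]
  -- step 2 : hseq n x ≤ ∫ hseq k d(P^m x)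
  have e2 : hseq P G n x ≤ ∫ y, hseq P G k y ∂((kpow P m) x) := by
    conv_lhs => rw [← hkm]
    exact hseq_le_kpow P hGmeas hG01 m k x
  -- step 3 : TV comparison
  have hAbound : ∀ A : Set S, MeasurableSet A →
      (((kpow P m) x) A).toReal ≤ (μ A).toReal + C₁ * α ^ m := by
    intro A hA
    have hbdd : BddAbove (Set.range fun B : {B : Set S // MeasurableSet B} =>
        |(((kpow P m) x) B.1).toReal - (μ B.1).toReal|) := by
      refine ⟨2, ?_⟩
      rintro r ⟨B, rfl⟩
      have h1 : (((kpow P m) x) B.1).toReal ≤ 1 := by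
        have := ENNReal.toReal_mono (measure_ne_top ((kpow P m) x) Set.univ)
          (measure_mono (Set.subset_univ B.1))
        simpa using this
      have h2 : (μ B.1).toReal ≤ 1 := by
        have := ENNReal.toReal_mono (measure_ne_top μ Set.univ)
          (measure_mono (Set.subset_univ B.1))
        simpa using this
      have h3 : (0:ℝ) ≤ (((kpow P m) x) B.1).toReal := ENNReal.toReal_nonneg
      have h4 : (0:ℝ) ≤ (μ B.1).toReal := ENNReal.toReal_nonneg
      rw [abs_le]
      constructor <;> linarith
    have hle : |(((kpow P m) x) A).toReal - (μ A).toReal| ≤ tvDist ((kpow P m) x) μ :=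
      le_ciSup hbdd ⟨A, hA⟩
    have h5 := le_of_abs_le (hle.trans (htv m))
    linarith
  have e3 : ∫ y, hseq P G k y ∂((kpow P m) x) ≤ ∫ y, hseq P G k y ∂μ + C₁ * α ^ m :=
    integral_le_integral_add_of_tv (hseq_sm P hGmeas k).measurable (hseq_nonneg P hG01 k)
      (hseq_le_one P hGmeas hG01 k) hAbound
  -- step 4 : stationary bound
  have hprodmeas : Measurable (fun ω : ℕ → S => ∏ i ∈ Finset.range k, G (ω i, ω (i + 1))) :=
    Finset.measurable_prod _ fun i _ =>
      hGmeas.comp ((measurable_pi_apply i).prodMk (measurable_pi_apply (i + 1)))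
  have e4 : ∫ y, hseq P G k y ∂μ ≤ C₂ * β ^ k := by
    have hb : ∫ ω, ∏ i ∈ Finset.range k, G (ω i, ω (i + 1)) ∂(μ.bind fun z => ξ z)
        = ∫ z, hseq P G k z ∂μ := by
      haveI : IsMarkovKernel ξ := ⟨fun z => (hξ z).1⟩
      rw [integral_bind01 μ ξ hprodmeas
        (fun ω => Finset.prod_nonneg fun i _ => (hG01 _).1)
        (fun ω => Finset.prod_le_one (fun i _ => (hG01 _).1) (fun i _ => (hG01 _).2))]
      refine integral_congr_ae (Filter.Eventually.of_forall fun z => ?_)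
      show (∫ ω, ∏ i ∈ Finset.range k, G (ω i, ω (i + 1)) ∂(ξ z)) = hseq P G k z
      rw [traj_integral_eq' P hGmeas hG01 (hξ z) k, integral_dirac' _ _ (hseq_sm P hGmeas k)]
    rw [← hb]
    exact hSμ k
  -- numeric bounds
  have hγn : γ ^ n = β ^ (θ * (n:ℝ)) := by
    rw [hγdef, ← Real.rpow_natCast (β ^ θ) n, ← Real.rpow_mul hβ.1.le]
  have hαm : α ^ m ≤ γ ^ n := by
    have h2 : α ^ ((m:ℝ)) ≤ α ^ ((1 - θ) * (n:ℝ)) :=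
      Real.rpow_le_rpow_of_exponent_ge hα.1 hα.2.le hmlb
    have h3 : α ^ ((1 - θ) * (n:ℝ)) = β ^ (θ * (n:ℝ)) := by
      rw [Real.rpow_def_of_pos hα.1, Real.rpow_def_of_pos hβ.1]
      congr 1
      linear_combination (-(n:ℝ)) * hθd
    rw [← Real.rpow_natCast α m, hγn, ← h3]
    exact h2
  have hβk : β ^ k ≤ γ ^ n / β := by
    have h1 : (θ * (n:ℝ) - 1 : ℝ) ≤ (k:ℝ) := by rw [hkcast]; linarith
    have h2 : β ^ ((k:ℝ)) ≤ β ^ (θ * (n:ℝ) - 1) :=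
      Real.rpow_le_rpow_of_exponent_ge hβ.1 hβ.2.le h1
    have h3 : β ^ (θ * (n:ℝ) - 1) = β ^ (θ * (n:ℝ)) / β := by
      rw [Real.rpow_sub hβ.1, Real.rpow_one]
    rw [← Real.rpow_natCast β k, hγn]
    rw [h3] at h2
    exact h2
  have hγn0 : (0:ℝ) ≤ γ ^ n := pow_nonneg hγpos.le n
  have hfin : C₂ * β ^ k + C₁ * α ^ m ≤ (C₂ / β + 2 * C₁) * γ ^ n := by
    have t1 : C₂ * β ^ k ≤ C₂ * (γ ^ n / β) := mul_le_mul_of_nonneg_left hβk hC₂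
    have t2 : C₁ * α ^ m ≤ C₁ * γ ^ n := mul_le_mul_of_nonneg_left hαm hC₁
    have t3 : C₂ * (γ ^ n / β) = C₂ / β * γ ^ n := by ring
    nlinarith [mul_nonneg hC₁ hγn0]
  calc ∫ ω, ∏ i ∈ Finset.range n, G (ω i, ω (i + 1)) ∂(ξ x)
      ≤ C₂ * β ^ k + C₁ * α ^ m := by
        rw [e1]; linarith [e2, e3, e4]
    _ ≤ (C₂ / β + 2 * C₁) * γ ^ n := hfin
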